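/- Let H be a Hilbert space ℓ²(ℕ₊), A a bounded, self-adjoint, positivity-preserving operator on H, P_N the orthogonal projection onto the span of the first N coordinates, and f a strictly positive eigenvector of A with eigenvalue E. Define f_N = P_N f, f̃_N = P_N A (1−P_N) f, r_N = ‖f_N‖², and Ã_N = P_N A P_N + r_N^{-1}(f̃_N ⟨f_N, ·⟩ + f_N ⟨f̃_N, ·⟩) as an operator on P_N H. Then f_N is an eigenvector of Ã_N with eigenvalue E + ⟨f_N, f̃_N⟩/r_N. -/

import Mathlib

noncomputable section

/-- The key step of the infinite-dimensional Perron–Frobenius argument: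
`f_N` is an eigenvector of the modified finite-rank-perturbed operator `Ã_N`
with eigenvalue `E + ⟨f_N, f̃_N⟩ / ‖f_N‖²`. -/
theorem truncated_operator_eigenvector
    (A : lp (fun _ : ℕ => ℝ) 2 →L[ℝ] lp (fun _ : ℕ => ℝ) 2)
    (hA : IsSelfAdjoint A)
    (hpos : ∀ g : lp (fun _ : ℕ => ℝ) 2, (∀ i, 0 ≤ g i) → ∀ i, 0 ≤ (A g) i)
    (f : lp (fun _ : ℕ => ℝ) 2) (hf : ∀ i, 0 < f i)
    (E : ℝ) (hEf : A f = E • f)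
    (P : ℕ → (lp (fun _ : ℕ => ℝ) 2 →L[ℝ] lp (fun _ : ℕ => ℝ) 2))
    (hP : ∀ (N : ℕ) (g : lp (fun _ : ℕ => ℝ) 2) (i : ℕ),
      (P N g) i = if i < N then g i else 0)
    (N : ℕ) (hN : 0 < N)
    (fN : lp (fun _ : ℕ => ℝ) 2) (hfN : fN = P N f)
    (ftN : lp (fun _ : ℕ => ℝ) 2) (hftN : ftN = P N (A (f - P N f)))
    (rN : ℝ) (hrN : rN = ‖fN‖ ^ 2)
    (Atil : lp (fun _ : ℕ => ℝ) 2 →L[ℝ] lp (fun _ : ℕ => ℝ) 2)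
    (hAtil : ∀ g, Atil g = P N (A (P N g))
      + rN⁻¹ • ((inner ℝ fN g : ℝ) • ftN + (inner ℝ ftN g : ℝ) • fN)) :
    Atil fN = (E + (inner ℝ fN ftN : ℝ) / rN) • fN := by
  have hfN0 : fN 0 = f 0 := by rw [hfN, hP]; simp [hN]
  have hne : fN ≠ 0 := by
    intro h
    have h0 := hf 0
    rw [← hfN0, h] at h0
    simp at h0
  have hrpos : 0 < rN := by
    rw [hrN]; exact pow_pos (norm_pos_iff.mpr hne) 2
  have hPP : P N fN = fN := by
    ext i
    rw [hP, hfN, hP]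
    split <;> simp [hP, *]
  have hAf : P N (A fN) = E • fN - ftN := by
    have h1 : A fN = E • f - A (f - P N f) := by
      rw [hfN, map_sub, hEf]; abel
    rw [h1, map_sub, map_smul, ← hftN, ← hfN]
  rw [hAtil, hPP, hAf, real_inner_self_eq_norm_sq, ← hrN,
    real_inner_comm ftN fN]
  rw [smul_add, smul_smul, inv_mul_cancel₀ hrpos.ne', one_smul]
  match_scalars
  field_simp
  ring
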